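/- Let β, γ, p be positive constants with βγ = p. Then there exist constants 0 < c₁ ≤ c₂ < ∞ such that for all A ∈ (0,1), c₁ · log(1 + A^{-1/γ}) ≤ ∫₀¹ r^{p-1} / (A + r^γ)^β dr ≤ c₂ · log(1 + A^{-1/γ}). -/

import Mathlib

open MeasureTheory Set

-- subadditivity/superadditivity of rpow
lemma myrpow_subadd {x y q : ℝ} (hx : 0 ≤ x) (hy : 0 ≤ y) (hq : 0 ≤ q) (hq1 : q ≤ 1) :
    (x + y) ^ q ≤ x ^ q + y ^ q := by
  lift x to NNReal using hx
  lift y to NNReal using hy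
  have := NNReal.rpow_add_le_add_rpow x y hq hq1
  exact_mod_cast this

lemma myrpow_superadd {x y q : ℝ} (hx : 0 ≤ x) (hy : 0 ≤ y) (hq : 1 ≤ q) :
    x ^ q + y ^ q ≤ (x + y) ^ q := by
  lift x to NNReal using hx
  lift y to NNReal using hy
  have := NNReal.add_rpow_le_rpow_add x y hq
  exact_mod_cast this

-- comparison (x+y)^β vs x^β + y^β for β > 0
lemma comp_upper {x y β : ℝ} (hβ : 0 < β) (hx : 0 ≤ x) (hy : 0 ≤ y) :
    (x + y) ^ β ≤ 2 ^ β * (x ^ β + y ^ β) := by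
  have hmax : x + y ≤ 2 * max x y := by
    rcases le_total x y with hc | hc <;> simp [max_eq_right, max_eq_left, hc] <;> linarith
  have h1 : (x + y) ^ β ≤ (2 * max x y) ^ β :=
    Real.rpow_le_rpow (by linarith [le_max_left x y]) hmax hβ.le
  have h2 : (2 * max x y) ^ β = 2 ^ β * (max x y) ^ β :=
    Real.mul_rpow (by norm_num) (le_max_of_le_left hx)
  have h3 : (max x y) ^ β ≤ x ^ β + y ^ β := by
    rcases le_total x y with hc | hc
    · rw [max_eq_right hc]; nlinarith [Real.rpow_nonneg hx β]
    · rw [max_eq_left hc]; nlinarith [Real.rpow_nonneg hy β]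
  calc (x+y)^β ≤ 2^β * (max x y)^β := by rw [← h2]; exact h1
    _ ≤ 2^β * (x^β + y^β) := by
        have : (0:ℝ) < 2^β := Real.rpow_pos_of_pos (by norm_num) β
        nlinarith

lemma comp_lower {x y β : ℝ} (hβ : 0 < β) (hx : 0 ≤ x) (hy : 0 ≤ y) :
    x ^ β + y ^ β ≤ 2 * (x + y) ^ β := by
  have h1 : x ^ β ≤ (x + y) ^ β := Real.rpow_le_rpow hx (by linarith) hβ.le
  have h2 : y ^ β ≤ (x + y) ^ β := Real.rpow_le_rpow hy (by linarith) hβ.le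
  linarith

-- log comparison
lemma log_comp {x q : ℝ} (hq : 0 < q) (hx : 1 ≤ x) :
    min 1 q * Real.log (1 + x) ≤ Real.log (1 + x ^ q) ∧
    Real.log (1 + x ^ q) ≤ max 1 q * Real.log (1 + x) := by
  have hx0 : (0:ℝ) < 1 + x := by linarith
  have hlog0 : 0 ≤ Real.log (1 + x) := Real.log_nonneg (by linarith)
  have hrw : q * Real.log (1 + x) = Real.log ((1 + x) ^ q) := (Real.log_rpow hx0 q).symm
  rcases le_total q 1 with hq1 | hq1
  · rw [min_eq_right hq1, max_eq_left hq1, one_mul]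
    constructor
    · rw [hrw]
      apply Real.log_le_log (Real.rpow_pos_of_pos hx0 q)
      calc (1 + x) ^ q ≤ 1 ^ q + x ^ q := myrpow_subadd zero_le_one (by linarith) hq.le hq1
        _ = 1 + x ^ q := by rw [Real.one_rpow]
    · apply Real.log_le_log (by positivity)
      have : x ^ q ≤ x := by
        calc x ^ q ≤ x ^ (1:ℝ) := Real.rpow_le_rpow_of_exponent_le hx hq1
          _ = x := Real.rpow_one x
      linarith
  · rw [min_eq_left hq1, max_eq_right hq1, one_mul]
    constructor
    · apply Real.log_le_log hx0
      have : x ≤ x ^ q := by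
        calc x = x ^ (1:ℝ) := (Real.rpow_one x).symm
          _ ≤ x ^ q := Real.rpow_le_rpow_of_exponent_le hx hq1
      linarith
    · rw [hrw]
      apply Real.log_le_log (by positivity)
      calc 1 + x ^ q = 1 ^ q + x ^ q := by rw [Real.one_rpow]
        _ ≤ (1 + x) ^ q := myrpow_superadd zero_le_one (by linarith) hq1

-- integrability of r^(p-1)/D r on Ioo 0 1 when D ≥ c > 0 on it
lemma integrable_aux {p c : ℝ} (hp : 0 < p) (hc : 0 < c) {D : ℝ → ℝ}
    (hD : Measurable D) (hDc : ∀ r ∈ Ioo (0:ℝ) 1, c ≤ D r) :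
    IntegrableOn (fun r => r ^ (p - 1) / D r) (Ioo (0:ℝ) 1) := by
  have hbase : IntegrableOn (fun r => r ^ (p - 1)) (Ioo (0:ℝ) 1) := by
    have h0 : IntervalIntegrable (fun x : ℝ => x ^ (p-1)) volume 0 1 :=
      intervalIntegral.intervalIntegrable_rpow' (by linarith)
    rw [intervalIntegrable_iff_integrableOn_Ioo_of_le (by norm_num)] at h0
    exact h0
  have hmeas : AEStronglyMeasurable (fun r => r ^ (p - 1) / D r)
      (volume.restrict (Ioo (0:ℝ) 1)) := by
    apply Measurable.aestronglyMeasurable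
    exact (by measurability : Measurable fun x : ℝ => x ^ (p-1)).div hD
  apply Integrable.mono' (hbase.const_mul c⁻¹) hmeas
  rw [ae_restrict_iff' measurableSet_Ioo]
  filter_upwards with r hr
  have hr0 : 0 < r := hr.1
  have hDr : c ≤ D r := hDc r hr
  have h1 : 0 ≤ r ^ (p-1) := Real.rpow_nonneg hr0.le _
  rw [Real.norm_eq_abs, abs_of_nonneg (div_nonneg h1 (by linarith))]
  rw [div_le_iff₀ (by linarith : (0:ℝ) < D r)]
  calc r ^ (p-1) = c⁻¹ * r^(p-1) * c := by field_simp
    _ ≤ c⁻¹ * r^(p-1) * D r := by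
        apply mul_le_mul_of_nonneg_left hDr
        positivity

-- exact integral
lemma integral_g {p B : ℝ} (hp : 0 < p) (hB : 0 < B) :
    ∫ r in Ioo (0:ℝ) 1, r ^ (p - 1) / (B + r ^ p) = (1/p) * Real.log (1 + B⁻¹) := by
  have hpos : ∀ x : ℝ, 0 ≤ x → 0 < B + x ^ p := by
    intro x hx
    have : 0 ≤ x ^ p := Real.rpow_nonneg hx p
    linarith
  have key : ∫ r in (0:ℝ)..1, r ^ (p - 1) / (B + r ^ p)
      = (1/p) * Real.log (B + (1:ℝ) ^ p) - (1/p) * Real.log (B + (0:ℝ) ^ p) := by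
    apply intervalIntegral.integral_eq_sub_of_hasDeriv_right_of_le (f := fun r => (1/p) * Real.log (B + r ^ p)) (by norm_num)
    · apply ContinuousOn.mul continuousOn_const
      apply ContinuousOn.log
      · exact continuousOn_const.add (continuousOn_id.rpow_const fun x _ => Or.inr hp.le)
      · intro x hx
        exact (hpos x hx.1).ne'
    · intro x hx
      have hx0 : 0 < x := hx.1
      have h1 : HasDerivAt (fun r : ℝ => B + r ^ p) (p * x ^ (p - 1)) x :=
        (Real.hasDerivAt_rpow_const (Or.inl hx0.ne')).const_add B
      have h2 := (h1.log (hpos x hx0.le).ne').const_mul (1/p)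
      have h3 : (1/p) * (p * x ^ (p - 1) / (B + x ^ p)) = x ^ (p - 1) / (B + x ^ p) := by
        field_simp
      rw [h3] at h2
      exact h2.hasDerivWithinAt
    · rw [intervalIntegrable_iff_integrableOn_Ioo_of_le (by norm_num)]
      apply integrable_aux hp hB (by measurability)
      intro r hr
      have : 0 ≤ r ^ p := Real.rpow_nonneg hr.1.le p
      linarith
  rw [Real.one_rpow, Real.zero_rpow hp.ne', add_zero] at key
  have h4 : ∫ r in (0:ℝ)..1, r ^ (p - 1) / (B + r ^ p)
      = ∫ r in Ioo (0:ℝ) 1, r ^ (p - 1) / (B + r ^ p) := by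
    rw [intervalIntegral.integral_of_le (by norm_num), integral_Ioc_eq_integral_Ioo]
  rw [← h4, key]
  rw [← mul_sub, ← Real.log_div (by linarith) hB.ne']
  congr 2
  field_simp

theorem stmt_1 (β γ p : ℝ) (hβ : 0 < β) (hγ : 0 < γ) (hp : 0 < p)
    (h : β * γ = p) :
    ∃ c₁ c₂ : ℝ, 0 < c₁ ∧ c₁ ≤ c₂ ∧ ∀ A ∈ Ioo (0:ℝ) 1,
      c₁ * Real.log (1 + A ^ (-(1 / γ))) ≤
        (∫ r in Ioo (0:ℝ) 1, r ^ (p - 1) / (A + r ^ γ) ^ β) ∧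
      (∫ r in Ioo (0:ℝ) 1, r ^ (p - 1) / (A + r ^ γ) ^ β) ≤
        c₂ * Real.log (1 + A ^ (-(1 / γ))) := by
  have hmin : 0 < min 1 p := lt_min one_pos hp
  have h2β : (0:ℝ) < 2 ^ β := Real.rpow_pos_of_pos (by norm_num) β
  have h2β1 : (1:ℝ) ≤ 2 ^ β := by
    have := Real.rpow_le_rpow_of_exponent_le (x := 2) one_le_two hβ.le (y := 0)
    rwa [Real.rpow_zero] at this
  refine ⟨(2 ^ β)⁻¹ * min 1 p / p, 2 * max 1 p / p, by positivity, ?_, ?_⟩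
  · apply div_le_div_of_nonneg_right ?_ hp.le
    have hinv : 0 < ((2:ℝ) ^ β)⁻¹ := inv_pos.2 h2β
    have hcancel : ((2:ℝ) ^ β) * ((2:ℝ) ^ β)⁻¹ = 1 := mul_inv_cancel₀ h2β.ne'
    have h1 : ((2:ℝ) ^ β)⁻¹ ≤ 1 := by nlinarith
    have h2 : min (1:ℝ) p ≤ max 1 p := min_le_max
    have h3 : min (1:ℝ) p ≤ 1 := min_le_left 1 p
    have h4 : (1:ℝ) ≤ max 1 p := le_max_left 1 p
    nlinarith [hmin.le]
  intro A hA
  obtain ⟨hA0, hA1⟩ := hA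
  set B := A ^ β with hBdef
  have hB : 0 < B := Real.rpow_pos_of_pos hA0 β
  set x := A ^ (-(1/γ)) with hxdef
  have hx1 : 1 < x := by
    rw [hxdef, Real.one_lt_rpow_iff_of_pos hA0]
    right
    exact ⟨hA1, by rw [neg_lt, neg_zero]; positivity⟩
  have hBinv : B⁻¹ = x ^ p := by
    rw [hBdef, hxdef, ← Real.rpow_neg hA0.le, ← Real.rpow_mul hA0.le]
    congr 1
    field_simp
    nlinarith [h]
  have hgamma_beta : ∀ r : ℝ, 0 ≤ r → r ^ p = (r ^ γ) ^ β := by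
    intro r hr
    rw [← Real.rpow_mul hr, ← h, mul_comm β γ]
  have hdenom_lb : ∀ r ∈ Ioo (0:ℝ) 1, B ≤ (A + r ^ γ) ^ β := by
    intro r hr
    apply Real.rpow_le_rpow hA0.le _ hβ.le
    have : 0 ≤ r ^ γ := Real.rpow_nonneg hr.1.le γ
    linarith
  have hint_f : IntegrableOn (fun r => r ^ (p - 1) / (A + r ^ γ) ^ β) (Ioo (0:ℝ) 1) :=
    integrable_aux hp hB (by measurability) hdenom_lb
  have hint_g : IntegrableOn (fun r => r ^ (p - 1) / (B + r ^ p)) (Ioo (0:ℝ) 1) := by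
    apply integrable_aux hp hB (by measurability)
    intro r hr
    have : 0 ≤ r ^ p := Real.rpow_nonneg hr.1.le p
    linarith
  have hG : ∫ r in Ioo (0:ℝ) 1, r ^ (p - 1) / (B + r ^ p) = (1/p) * Real.log (1 + x ^ p) := by
    rw [integral_g hp hB, hBinv]
  obtain ⟨hlog1, hlog2⟩ := log_comp hp hx1.le
  have hptlow : ∀ r ∈ Ioo (0:ℝ) 1,
      (2 ^ β)⁻¹ * (r ^ (p - 1) / (B + r ^ p)) ≤ r ^ (p - 1) / (A + r ^ γ) ^ β := by
    intro r hr
    have hr0 : 0 < r := hr.1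
    have hrg : 0 ≤ r ^ γ := Real.rpow_nonneg hr0.le γ
    have hnum : 0 ≤ r ^ (p - 1) := Real.rpow_nonneg hr0.le _
    have hBr : 0 < B + r ^ p := by
      have : 0 ≤ r ^ p := Real.rpow_nonneg hr0.le p
      linarith
    have hd1 : (A + r ^ γ) ^ β ≤ 2 ^ β * (B + r ^ p) := by
      have := comp_upper hβ hA0.le hrg
      rw [hgamma_beta r hr0.le]
      exact this
    have hdpos : 0 < (A + r ^ γ) ^ β := Real.rpow_pos_of_pos (by linarith) β
    have step : r ^ (p - 1) / (2 ^ β * (B + r ^ p)) ≤ r ^ (p - 1) / (A + r ^ γ) ^ β :=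
      div_le_div_of_nonneg_left hnum hdpos hd1
    calc (2 ^ β)⁻¹ * (r ^ (p - 1) / (B + r ^ p))
        = r ^ (p - 1) / (2 ^ β * (B + r ^ p)) := by
          field_simp
      _ ≤ _ := step
  have hpthigh : ∀ r ∈ Ioo (0:ℝ) 1,
      r ^ (p - 1) / (A + r ^ γ) ^ β ≤ 2 * (r ^ (p - 1) / (B + r ^ p)) := by
    intro r hr
    have hr0 : 0 < r := hr.1
    have hrg : 0 ≤ r ^ γ := Real.rpow_nonneg hr0.le γ
    have hnum : 0 ≤ r ^ (p - 1) := Real.rpow_nonneg hr0.le _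
    have hBr : 0 < B + r ^ p := by
      have : 0 ≤ r ^ p := Real.rpow_nonneg hr0.le p
      linarith
    have hd2 : (B + r ^ p) / 2 ≤ (A + r ^ γ) ^ β := by
      have := comp_lower hβ hA0.le hrg
      rw [hgamma_beta r hr0.le]
      linarith
    have step : r ^ (p - 1) / (A + r ^ γ) ^ β ≤ r ^ (p - 1) / ((B + r ^ p) / 2) :=
      div_le_div_of_nonneg_left hnum (by linarith) hd2
    calc r ^ (p - 1) / (A + r ^ γ) ^ β ≤ r ^ (p - 1) / ((B + r ^ p) / 2) := step
      _ = 2 * (r ^ (p - 1) / (B + r ^ p)) := by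
          field_simp
  constructor
  · have hmono : ∫ r in Ioo (0:ℝ) 1, (2 ^ β)⁻¹ * (r ^ (p - 1) / (B + r ^ p))
        ≤ ∫ r in Ioo (0:ℝ) 1, r ^ (p - 1) / (A + r ^ γ) ^ β :=
      setIntegral_mono_on (hint_g.const_mul _) hint_f measurableSet_Ioo hptlow
    rw [integral_const_mul, hG] at hmono
    have key : (2 ^ β)⁻¹ / p * (min 1 p * Real.log (1 + x))
        ≤ (2 ^ β)⁻¹ / p * Real.log (1 + x ^ p) :=
      mul_le_mul_of_nonneg_left hlog1 (by positivity)
    calc (2 ^ β)⁻¹ * min 1 p / p * Real.log (1 + x)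
        = (2 ^ β)⁻¹ / p * (min 1 p * Real.log (1 + x)) := by ring
      _ ≤ (2 ^ β)⁻¹ / p * Real.log (1 + x ^ p) := key
      _ = (2 ^ β)⁻¹ * ((1/p) * Real.log (1 + x ^ p)) := by ring
      _ ≤ _ := hmono
  · have hmono : ∫ r in Ioo (0:ℝ) 1, r ^ (p - 1) / (A + r ^ γ) ^ β
        ≤ ∫ r in Ioo (0:ℝ) 1, 2 * (r ^ (p - 1) / (B + r ^ p)) :=
      setIntegral_mono_on hint_f (hint_g.const_mul _) measurableSet_Ioo hpthigh
    rw [integral_const_mul, hG] at hmono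
    have key : 2 / p * Real.log (1 + x ^ p) ≤ 2 / p * (max 1 p * Real.log (1 + x)) :=
      mul_le_mul_of_nonneg_left hlog2 (by positivity)
    calc (∫ r in Ioo (0:ℝ) 1, r ^ (p - 1) / (A + r ^ γ) ^ β)
        ≤ 2 * ((1/p) * Real.log (1 + x ^ p)) := hmono
      _ = 2 / p * Real.log (1 + x ^ p) := by ring
      _ ≤ 2 / p * (max 1 p * Real.log (1 + x)) := key
      _ = 2 * max 1 p / p * Real.log (1 + x) := by ring
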